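/- arXiv:2203.12726 — 3 statements merged into one kernel-verified Lean document; each statement's English description precedes it below -/
import Mathlib

section
/- Characterization of the randomized LASSO selection event in the single-covariate case: let Σ = [[1,ρ],[ρ,1]] with ρ ∈ (−1,1), let γ̂ = (α̂, β̂)' ∈ ℝ², ω = (ω₁, ω₂)' ∈ ℝ², λ > 0, N ≥ 1, and consider the strictly convex objective f(a,b) = (√N/2)·((a,b)' − γ̂)' Σ ((a,b)' − γ̂) − ω₁ a − ω₂ b + λ|b|. Then the unique minimizer (â, b̂) of f satisfies b̂ ≠ 0 with sign(b̂) = s if and only if s(ω₂ − ρω₁) + s(1 − ρ²)√N β̂ − λ > 0. -/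
open Real Set

lemma lasso_key_identity (m ρ α β ω₁ ω₂ lam a₀ b₀ d q1 q2 : ℝ)
    (ha : m*(a₀-α) + m*ρ*(b₀-β) = ω₁)
    (hd : d = m*ρ*(a₀-α) + m*(b₀-β) - ω₂) :
    (m/2*((q1-α)^2+2*ρ*(q1-α)*(q2-β)+(q2-β)^2) - ω₁*q1 - ω₂*q2 + lam*|q2|)
    - (m/2*((a₀-α)^2+2*ρ*(a₀-α)*(b₀-β)+(b₀-β)^2) - ω₁*a₀ - ω₂*b₀ + lam*|b₀|)
    = d*(q2-b₀) + lam*(|q2|-|b₀|)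
      + m/2*((q1-a₀)^2+2*ρ*(q1-a₀)*(q2-b₀)+(q2-b₀)^2) := by
  linear_combination (q1-a₀)*ha - (q2-b₀)*hd

lemma lasso_quad_lb (m ρ u v : ℝ) (hm : 0 < m) (hρ₁ : -1 < ρ) (hρ₂ : ρ < 1) :
    m*(1-|ρ|)/2*(u^2+v^2) ≤ m/2*(u^2+2*ρ*u*v+v^2) := by
  rcases le_or_gt 0 ρ with h | h
  · rw [abs_of_nonneg h]
    nlinarith [mul_nonneg (mul_nonneg hm.le h) (sq_nonneg (u+v))]
  · rw [abs_of_neg h]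
    nlinarith [mul_nonneg (mul_nonneg hm.le (neg_nonneg.mpr h.le)) (sq_nonneg (u-v))]

/-- Characterization of the randomized LASSO selection event in the
single-covariate case: for the strictly convex objective
`f(a,b) = (√N/2) ((a,b)' - γ̂)' Σ ((a,b)' - γ̂) - ω₁ a - ω₂ b + λ |b|` with
`Σ = [[1, ρ], [ρ, 1]]`, the objective has a unique minimizer, and the minimizer `(â, b̂)`
satisfies `b̂ ≠ 0` with `sign(b̂) = s` (i.e. `s b̂ > 0`) if and only if
`s (ω₂ - ρ ω₁) + s (1 - ρ²) √N β̂ - λ > 0`. -/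
theorem randomized_lasso_selection_event_characterization
    (ρ s lam αhat βhat ω₁ ω₂ : ℝ) (N : ℕ) (hN : 1 ≤ N)
    (hρ : ρ ∈ Set.Ioo (-1 : ℝ) 1) (hs : s = 1 ∨ s = -1) (hlam : 0 < lam)
    (f : ℝ × ℝ → ℝ)
    (hf : f = fun p =>
      Real.sqrt N / 2 *
          ((p.1 - αhat) ^ 2 + 2 * ρ * (p.1 - αhat) * (p.2 - βhat) + (p.2 - βhat) ^ 2)
        - ω₁ * p.1 - ω₂ * p.2 + lam * |p.2|) :
    (∃! p : ℝ × ℝ, ∀ q : ℝ × ℝ, f p ≤ f q) ∧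
      ∀ p : ℝ × ℝ, (∀ q : ℝ × ℝ, f p ≤ f q) →
        (0 < s * p.2 ↔
          0 < s * (ω₂ - ρ * ω₁) + s * (1 - ρ ^ 2) * Real.sqrt N * βhat - lam) := by
  obtain ⟨hρ₁, hρ₂⟩ := hρ
  obtain ⟨m, hmdef⟩ : ∃ x : ℝ, x = Real.sqrt N := ⟨_, rfl⟩
  have hm : 0 < m := by
    rw [hmdef]
    exact Real.sqrt_pos.mpr (by exact_mod_cast Nat.lt_of_lt_of_le Nat.zero_lt_one hN)
  have hc : 0 < m * (1 - ρ ^ 2) := by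
    have h12 : 0 < 1 - ρ ^ 2 := by nlinarith [mul_pos (by linarith : (0:ℝ) < 1 + ρ) (by linarith : (0:ℝ) < 1 - ρ)]
    exact mul_pos hm h12
  obtain ⟨c, hcdef⟩ : ∃ x : ℝ, x = m * (1 - ρ ^ 2) := ⟨_, rfl⟩
  rw [← hcdef] at hc
  obtain ⟨T, hT⟩ : ∃ x : ℝ, x = ω₂ - ρ * ω₁ + c * βhat := ⟨_, rfl⟩
  obtain ⟨b₀, hb₀⟩ : ∃ x : ℝ,
      x = if lam < T then (T - lam) / c else if T < -lam then (T + lam) / c else 0 := ⟨_, rfl⟩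
  obtain ⟨a₀, ha₀⟩ : ∃ x : ℝ, x = αhat + ω₁ / m - ρ * (b₀ - βhat) := ⟨_, rfl⟩
  obtain ⟨d, hd⟩ : ∃ x : ℝ, x = c * b₀ - T := ⟨_, rfl⟩
  -- gradient conditions
  have ha : m * (a₀ - αhat) + m * ρ * (b₀ - βhat) = ω₁ := by
    rw [ha₀]; field_simp; ring
  have hdgrad : d = m * ρ * (a₀ - αhat) + m * (b₀ - βhat) - ω₂ := by
    rw [hd, ha₀, hT, hcdef]; field_simp; ring
  have hdb : d * b₀ = -lam * |b₀| ∧ |d| ≤ lam := by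
    rw [hd, hb₀]
    split_ifs with h1 h2
    · have hb : 0 < (T - lam) / c := div_pos (by linarith) hc
      rw [abs_of_pos hb]
      rw [mul_div_cancel₀ _ (ne_of_gt hc)]
      constructor
      · ring
      · rw [show T - lam - T = -lam by ring, abs_neg, abs_of_pos hlam]
    · have hb : (T + lam) / c < 0 := div_neg_of_neg_of_pos (by linarith) hc
      rw [abs_of_neg hb]
      rw [mul_div_cancel₀ _ (ne_of_gt hc)]
      constructor
      · ring
      · rw [show T + lam - T = lam by ring, abs_of_pos hlam]
    · simp only [mul_zero, abs_zero, zero_sub, abs_neg]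
      exact ⟨by simp, abs_le.mpr ⟨by linarith, by linarith⟩⟩
  -- key inequality
  have hkey : ∀ q : ℝ × ℝ,
      f (a₀, b₀) + m * (1 - |ρ|) / 2 * ((q.1 - a₀) ^ 2 + (q.2 - b₀) ^ 2) ≤ f q := by
    intro q
    have hid := lasso_key_identity m ρ αhat βhat ω₁ ω₂ lam a₀ b₀ d q.1 q.2 ha hdgrad
    have h1 : 0 ≤ d * (q.2 - b₀) + lam * (|q.2| - |b₀|) := by
      have h2 : |d * q.2| ≤ lam * |q.2| := by
        rw [abs_mul]
        exact mul_le_mul_of_nonneg_right hdb.2 (abs_nonneg _)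
      nlinarith [neg_abs_le (d * q.2), hdb.1]
    have hq := lasso_quad_lb m ρ (q.1 - a₀) (q.2 - b₀) hm hρ₁ hρ₂
    rw [hf]
    dsimp only
    rw [← hmdef]
    linarith
  have habs : 0 < m * (1 - |ρ|) / 2 := by
    have h : |ρ| < 1 := abs_lt.mpr ⟨hρ₁, hρ₂⟩
    have : 0 < 1 - |ρ| := by linarith
    positivity
  have huniq : ∀ p : ℝ × ℝ, (∀ q : ℝ × ℝ, f p ≤ f q) → p = (a₀, b₀) := by
    intro p hp
    have h1 := hp (a₀, b₀)
    have h2 := hkey p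
    have hsq : 0 ≤ (p.1 - a₀) ^ 2 + (p.2 - b₀) ^ 2 := by positivity
    have h0 : (p.1 - a₀) ^ 2 + (p.2 - b₀) ^ 2 ≤ 0 := by
      by_contra hcon
      push_neg at hcon
      have := mul_pos habs hcon
      linarith
    have hzero : (p.1 - a₀) ^ 2 + (p.2 - b₀) ^ 2 = 0 := le_antisymm h0 hsq
    clear h0 hsq h1 h2 hp hkey hf ha hdgrad hdb
    have h4 : p.1 - a₀ = 0 := by
      have h6 : (p.1 - a₀) ^ 2 = 0 := by
        linarith [sq_nonneg (p.1 - a₀), sq_nonneg (p.2 - b₀)]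
      exact pow_eq_zero_iff (n := 2) (by norm_num) |>.mp h6
    have h5 : p.2 - b₀ = 0 := by
      have h6 : (p.2 - b₀) ^ 2 = 0 := by
        linarith [sq_nonneg (p.1 - a₀), sq_nonneg (p.2 - b₀)]
      exact pow_eq_zero_iff (n := 2) (by norm_num) |>.mp h6
    exact Prod.ext (by linarith) (by linarith)
  have hmin : ∀ q : ℝ × ℝ, f (a₀, b₀) ≤ f q := by
    intro q
    have h1 := hkey q
    have h2 : 0 ≤ m * (1 - |ρ|) / 2 * ((q.1 - a₀) ^ 2 + (q.2 - b₀) ^ 2) := by positivity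
    linarith
  constructor
  · exact ⟨(a₀, b₀), hmin, fun p hp => huniq p hp⟩
  · intro p hp
    rw [huniq p hp]
    clear hp huniq hmin hkey habs hdb hdgrad ha hf f
    have hTs : s * (ω₂ - ρ * ω₁) + s * (1 - ρ ^ 2) * Real.sqrt N * βhat - lam
        = s * T - lam := by rw [hT, hcdef, hmdef]; ring
    rw [hTs]
    dsimp only
    rw [hb₀]
    rcases hs with rfl | rfl
    · simp only [one_mul]
      split_ifs with h1 h2
      · constructor <;> intro _
        · linarith
        · exact div_pos (by linarith) hc
      · have : (T + lam) / c < 0 := div_neg_of_neg_of_pos (by linarith) hc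
        constructor <;> intro h <;> linarith
      · constructor <;> intro h <;> linarith
    · simp only [neg_one_mul]
      split_ifs with h1 h2
      · have : 0 < (T - lam) / c := div_pos (by linarith) hc
        constructor <;> intro h <;> linarith
      · have : (T + lam) / c < 0 := div_neg_of_neg_of_pos (by linarith) hc
        constructor <;> intro h <;> linarith
      · constructor <;> intro h <;> linarith
end

section
/- Relative efficiency gain of carving over splitting: let Σ be a symmetric positive definite (s+q)×(s+q) real matrix with smallest eigenvalue λ_min > 0, let H be a symmetric positive semidefinite (s+q)×(s+q) matrix whose largest eigenvalue is at most B_max ≥ 0, and let r ∈ (0,1). For any coordinate j, define V^carve_j = e_j'( (1−r)^{-1} Σ^{-1} − (1−r)^{-2} r² ((1−r)^{-1} r Σ + H)^{-1} ) e_j and V^split_j = (1−r)^{-1} e_j' Σ^{-1} e_j, where e_j is the j-th standard basis vector. Then (V^split_j)^{-1} (V^split_j − V^carve_j) ≥ (1−r)^{-1} r² ( (1−r)^{-1} r + B_max / λ_min )^{-1}. -/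
open Matrix Set

private lemma posDef_smul_real {n : ℕ} {A : Matrix (Fin n) (Fin n) ℝ} (hA : A.PosDef)
    {c : ℝ} (hc : 0 < c) : (c • A).PosDef := by
  refine posDef_iff_dotProduct_mulVec.mpr ⟨?_, fun x hx => ?_⟩
  · unfold Matrix.IsHermitian
    rw [conjTranspose_smul, hA.1]
    simp
  · have := hA.dotProduct_mulVec_pos hx
    simp only [smul_mulVec, dotProduct_smul, smul_eq_mul] at *
    exact mul_pos hc this

private lemma quad_diag {n : ℕ} (A : Matrix (Fin n) (Fin n) ℝ) (j : Fin n) :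
    (Pi.single j 1 : Fin n → ℝ) ⬝ᵥ (A *ᵥ Pi.single j 1) = A j j := by
  simp [mulVec_single, dotProduct, Pi.single_apply]

/-- Relative efficiency gain of carving over splitting: with `Σ` symmetric
positive definite with smallest eigenvalue `λ_min > 0`, `H` symmetric positive semidefinite with
largest eigenvalue at most `B_max ≥ 0`, and `r ∈ (0,1)`, the `j`-th diagonal entries
`V^carve_j = ((1-r)⁻¹ Σ⁻¹ - (1-r)⁻² r² ((1-r)⁻¹ r Σ + H)⁻¹)_{jj}` and
`V^split_j = (1-r)⁻¹ (Σ⁻¹)_{jj}` satisfy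
`(V^split_j)⁻¹ (V^split_j - V^carve_j) ≥ (1-r)⁻¹ r² ((1-r)⁻¹ r + B_max / λ_min)⁻¹`.
The eigenvalue conditions are expressed through the corresponding quadratic-form bounds. -/
theorem relative_efficiency_gain_carve_over_split
    {n : ℕ} (Sig H : Matrix (Fin n) (Fin n) ℝ)
    (hSigpd : Sig.PosDef) (hSigsym : Sig.IsSymm)
    (hHpsd : H.PosSemidef) (hHsym : H.IsSymm)
    (r lammin Bmax : ℝ) (hr : r ∈ Set.Ioo (0 : ℝ) 1)
    (hlam : 0 < lammin) (hB : 0 ≤ Bmax)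
    -- `λ_min` is the smallest eigenvalue of `Σ`: lower bound on the quadratic form
    (hmin : ∀ x : Fin n → ℝ, lammin * (x ⬝ᵥ x) ≤ x ⬝ᵥ (Sig *ᵥ x))
    -- the largest eigenvalue of `H` is at most `B_max`
    (hmax : ∀ x : Fin n → ℝ, x ⬝ᵥ (H *ᵥ x) ≤ Bmax * (x ⬝ᵥ x))
    (j : Fin n) :
    ((1 - r)⁻¹ * Sig⁻¹ j j)⁻¹ *
        ((1 - r)⁻¹ * Sig⁻¹ j j -
          ((1 - r)⁻¹ • Sig⁻¹ -
            (((1 - r)⁻¹ * r) ^ 2) • (((1 - r)⁻¹ * r) • Sig + H)⁻¹) j j)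
      ≥ (1 - r)⁻¹ * r ^ 2 * ((1 - r)⁻¹ * r + Bmax / lammin)⁻¹ := by
  obtain ⟨hr0, hr1⟩ := hr
  have hs : (0 : ℝ) < 1 - r := by linarith
  set c : ℝ := (1 - r)⁻¹ * r with hc_def
  have hc : 0 < c := mul_pos (inv_pos.2 hs) hr0
  set M : Matrix (Fin n) (Fin n) ℝ := c • Sig + H with hM_def
  set t : ℝ := c + Bmax / lammin with ht_def
  have hBl : 0 ≤ Bmax / lammin := div_nonneg hB hlam.le
  have ht : 0 < t := by rw [ht_def]; linarith
  set S : Matrix (Fin n) (Fin n) ℝ := t • Sig with hS_def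
  have hMpd : M.PosDef := (posDef_smul_real hSigpd hc).add_posSemidef hHpsd
  have hSpd : S.PosDef := posDef_smul_real hSigpd ht
  -- M ⪯ S
  have hMS : ∀ x : Fin n → ℝ, x ⬝ᵥ (M *ᵥ x) ≤ x ⬝ᵥ (S *ᵥ x) := by
    intro x
    have h2 := hmin x
    have h3 : (Bmax / lammin) * (lammin * (x ⬝ᵥ x)) ≤
        (Bmax / lammin) * (x ⬝ᵥ (Sig *ᵥ x)) :=
      mul_le_mul_of_nonneg_left h2 hBl
    have h4 : (Bmax / lammin) * (lammin * (x ⬝ᵥ x)) = Bmax * (x ⬝ᵥ x) := by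
      field_simp
    have h5 := hmax x
    rw [hM_def, hS_def, ht_def]
    simp only [add_mulVec, smul_mulVec, dotProduct_add,
      dotProduct_smul, smul_eq_mul]
    nlinarith
  -- inverses of smul
  have hSinv : S⁻¹ = t⁻¹ • Sig⁻¹ := by
    rw [hS_def]
    refine Matrix.inv_eq_left_inv ?_
    rw [Matrix.smul_mul, Matrix.mul_smul, smul_smul,
      Matrix.nonsing_inv_mul _ (isUnit_iff_ne_zero.2 hSigpd.det_pos.ne'),
      inv_mul_cancel₀ ht.ne']
    simp
  clear_value c t M S
  -- setup
  set e : Fin n → ℝ := Pi.single j 1 with he_def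
  have he : e ≠ 0 := by
    intro h
    have := congrFun h j
    simp [he_def] at this
  have hMdet : IsUnit M.det := isUnit_iff_ne_zero.2 hMpd.det_pos.ne'
  have hSdet : IsUnit S.det := isUnit_iff_ne_zero.2 hSpd.det_pos.ne'
  set u : Fin n → ℝ := S⁻¹ *ᵥ e with hu_def
  set v : Fin n → ℝ := M⁻¹ *ᵥ e with hv_def
  have hSu : S *ᵥ u = e := by
    rw [hu_def, mulVec_mulVec, mul_nonsing_inv _ hSdet, one_mulVec]
  have hMv : M *ᵥ v = e := by
    rw [hv_def, mulVec_mulVec, mul_nonsing_inv _ hMdet, one_mulVec]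
  set a : ℝ := e ⬝ᵥ u with ha_def
  set b : ℝ := e ⬝ᵥ v with hb_def
  have ha_pos : 0 < a := by
    have := hSpd.inv.dotProduct_mulVec_pos he
    simpa [ha_def, hu_def] using this
  clear_value e u v a b
  -- symmetry of M
  have hMsym : M.IsSymm := by
    rw [hM_def, Matrix.IsSymm, transpose_add, transpose_smul, hSigsym.eq, hHsym.eq]
  have hsymuv : v ⬝ᵥ (M *ᵥ u) = u ⬝ᵥ (M *ᵥ v) := by
    rw [dotProduct_mulVec u, ← mulVec_transpose, hMsym.eq, dotProduct_comm]
  -- Cauchy-Schwarz via discriminant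
  have hcs : (u ⬝ᵥ (M *ᵥ v)) ^ 2 ≤ (v ⬝ᵥ (M *ᵥ v)) * (u ⬝ᵥ (M *ᵥ u)) := by
    have hquad : ∀ τ : ℝ, 0 ≤ (v ⬝ᵥ (M *ᵥ v)) * (τ * τ) +
        (2 * (u ⬝ᵥ (M *ᵥ v))) * τ + (u ⬝ᵥ (M *ᵥ u)) := by
      intro τ
      have h0 := hMpd.posSemidef.dotProduct_mulVec_nonneg (u + τ • v)
      simp only [star_trivial, mulVec_add, mulVec_smul, dotProduct_add,
        dotProduct_smul, add_dotProduct, smul_dotProduct, smul_eq_mul] at h0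
      rw [hsymuv] at h0
      nlinarith [h0]
    have := discrim_le_zero hquad
    rw [discrim] at this
    nlinarith
  have huMv : u ⬝ᵥ (M *ᵥ v) = a := by rw [hMv, dotProduct_comm, ha_def]
  have hvMv : v ⬝ᵥ (M *ᵥ v) = b := by rw [hMv, dotProduct_comm, hb_def]
  have huMu : u ⬝ᵥ (M *ᵥ u) ≤ a := by
    have h := hMS u
    rw [hSu, dotProduct_comm u e, ← ha_def] at h
    exact h
  have huMu0 : 0 ≤ u ⬝ᵥ (M *ᵥ u) := by
    have := hMpd.posSemidef.dotProduct_mulVec_nonneg u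
    simpa using this
  have hb0 : 0 ≤ b := by
    have := hMpd.posSemidef.dotProduct_mulVec_nonneg v
    rw [star_trivial, hvMv] at this
    exact this
  have hab : a ≤ b := by
    have h1 : a ^ 2 ≤ b * (u ⬝ᵥ (M *ᵥ u)) := by
      rw [← huMv, ← hvMv]; exact hcs
    have h2 : b * (u ⬝ᵥ (M *ᵥ u)) ≤ b * a := mul_le_mul_of_nonneg_left huMu hb0
    nlinarith
  -- values of a and b
  have ha_val : a = t⁻¹ * Sig⁻¹ j j := by
    rw [ha_def, hu_def, hSinv, he_def, quad_diag]
    simp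
  have hb_val : b = M⁻¹ j j := by
    rw [hb_def, hv_def, he_def, quad_diag]
  -- positivity of Sig⁻¹ j j
  have hA : 0 < Sig⁻¹ j j := by
    have := hSigpd.inv.dotProduct_mulVec_pos (x := Pi.single j 1) (by rw [← he_def]; exact he)
    rwa [star_trivial, quad_diag Sig⁻¹ j] at this
  -- final arithmetic
  have hbM : t⁻¹ * Sig⁻¹ j j ≤ M⁻¹ j j := by rw [← ha_val, ← hb_val]; exact hab
  have hentry : ((1 - r)⁻¹ • Sig⁻¹ - c ^ 2 • M⁻¹) j j
      = (1 - r)⁻¹ * Sig⁻¹ j j - c ^ 2 * M⁻¹ j j := by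
    simp [Matrix.sub_apply, Matrix.smul_apply, smul_eq_mul]
  rw [hentry]
  set P : ℝ := Sig⁻¹ j j with hP_def
  set Q : ℝ := M⁻¹ j j with hQ_def
  clear_value P Q
  have hsimp : ((1 - r)⁻¹ * P)⁻¹ *
      ((1 - r)⁻¹ * P - ((1 - r)⁻¹ * P - c ^ 2 * Q))
      = (1 - r)⁻¹ * r ^ 2 * ((P)⁻¹ * Q) := by
    rw [hc_def]
    field_simp
    ring
  rw [hsimp]
  have hkey : t⁻¹ ≤ (P)⁻¹ * Q := by
    have h1 : (P)⁻¹ * (t⁻¹ * P) ≤ (P)⁻¹ * Q :=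
      mul_le_mul_of_nonneg_left hbM (inv_nonneg.2 hA.le)
    have h2 : (P)⁻¹ * (t⁻¹ * P) = t⁻¹ := by
      field_simp
    linarith
  have hfac : 0 ≤ (1 - r)⁻¹ * r ^ 2 := by positivity
  calc (1 - r)⁻¹ * r ^ 2 * ((P)⁻¹ * Q)
      ≥ (1 - r)⁻¹ * r ^ 2 * t⁻¹ := mul_le_mul_of_nonneg_left hkey hfac
    _ = (1 - r)⁻¹ * r ^ 2 * t⁻¹ := rfl
end

section
/- Strong convexity of the conjugate of the carved objective: let Σ̂ be a symmetric positive definite d×d real matrix with largest eigenvalue λ_max, let r ∈ (0,1), set c₂ = (1−r)^{-1} r, fix a ∈ ℝ^d, and let φ : ℝ^d → ℝ ∪ {+∞} be a proper convex lower semicontinuous function that is bounded below. Define D(γ) = (1/2) γ' Σ̂ γ + inf_{z ∈ ℝ^d} { (c₂/2)(z − γ + a)' Σ̂ (z − γ + a) + φ(z) }. Then D is convex, and its Fenchel conjugate D*(η) = sup_γ { γ'η − D(γ) } is strongly convex with strong convexity parameter at least (1−r) λ_max^{-1}. -/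
open Matrix Set

namespace SCAux

variable {d : ℕ}

noncomputable def scI (Sig : Matrix (Fin d) (Fin d) ℝ) (c₂ : ℝ) (a : Fin d → ℝ)
    (φ : (Fin d → ℝ) → EReal) (γ : Fin d → ℝ) : EReal :=
  ⨅ z : Fin d → ℝ, (((c₂ / 2) * ((z - γ + a) ⬝ᵥ (Sig *ᵥ (z - γ + a))) : ℝ) : EReal) + φ z

noncomputable def scG (Sig : Matrix (Fin d) (Fin d) ℝ) (c₂ : ℝ) (a : Fin d → ℝ)
    (φ : (Fin d → ℝ) → EReal) (γ : Fin d → ℝ) : ℝ :=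
  (scI Sig c₂ a φ γ).toReal

variable {Sig : Matrix (Fin d) (Fin d) ℝ} {c₂ : ℝ} {a : Fin d → ℝ}
  {φ : (Fin d → ℝ) → EReal} {m : ℝ}

lemma symm_dot (hSigsym : Sig.IsSymm) (x y : Fin d → ℝ) :
    x ⬝ᵥ Sig *ᵥ y = y ⬝ᵥ Sig *ᵥ x := by
  rw [Matrix.dotProduct_mulVec, ← Matrix.mulVec_transpose, hSigsym.eq, dotProduct_comm]

lemma quadId (x y : Fin d → ℝ) (s t : ℝ) (hst : s + t = 1) :
    s * (x ⬝ᵥ Sig *ᵥ x) + t * (y ⬝ᵥ Sig *ᵥ y)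
      = (s • x + t • y) ⬝ᵥ Sig *ᵥ (s • x + t • y)
        + s * t * ((x - y) ⬝ᵥ Sig *ᵥ (x - y)) := by
  simp only [Matrix.mulVec_add, Matrix.mulVec_smul, Matrix.mulVec_sub,
    dotProduct_add, add_dotProduct, smul_dotProduct, dotProduct_smul,
    dotProduct_sub, sub_dotProduct, smul_eq_mul]
  linear_combination (-(s * (x ⬝ᵥ Sig *ᵥ x) + t * (y ⬝ᵥ Sig *ᵥ y))) * hst

lemma dotId (x y : Fin d → ℝ) (s t : ℝ) (hst : s + t = 1) :
    s * (x ⬝ᵥ x) + t * (y ⬝ᵥ y)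
      = (s • x + t • y) ⬝ᵥ (s • x + t • y) + s * t * ((x - y) ⬝ᵥ (x - y)) := by
  simp only [dotProduct_add, add_dotProduct, smul_dotProduct, dotProduct_smul,
    dotProduct_sub, sub_dotProduct, smul_eq_mul]
  linear_combination (-(s * (x ⬝ᵥ x) + t * (y ⬝ᵥ y))) * hst

lemma scI_lb (hpsd : ∀ x : Fin d → ℝ, 0 ≤ x ⬝ᵥ (Sig *ᵥ x)) (hc₂0 : 0 ≤ c₂)
    (hm : ∀ z, (m : EReal) ≤ φ z) (γ : Fin d → ℝ) :
    (m : EReal) ≤ scI Sig c₂ a φ γ := by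
  refine le_iInf fun z => ?_
  have h1 : (0:ℝ) ≤ (c₂ / 2) * ((z - γ + a) ⬝ᵥ (Sig *ᵥ (z - γ + a))) :=
    mul_nonneg (by linarith) (hpsd _)
  have := add_le_add (EReal.coe_le_coe_iff.mpr h1) (hm z)
  simpa using this

lemma scI_ne_bot (hpsd : ∀ x : Fin d → ℝ, 0 ≤ x ⬝ᵥ (Sig *ᵥ x)) (hc₂0 : 0 ≤ c₂)
    (hm : ∀ z, (m : EReal) ≤ φ z) (γ : Fin d → ℝ) :
    scI Sig c₂ a φ γ ≠ ⊥ :=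
  ((EReal.bot_lt_coe m).trans_le (scI_lb hpsd hc₂0 hm γ)).ne'

lemma scI_ne_top (hφne_bot : ∀ z, φ z ≠ ⊥) {z₀ : Fin d → ℝ} (hz₀ : φ z₀ ≠ ⊤)
    (γ : Fin d → ℝ) : scI Sig c₂ a φ γ ≠ ⊤ := by
  have h := iInf_le
    (fun z => (((c₂ / 2) * ((z - γ + a) ⬝ᵥ (Sig *ᵥ (z - γ + a))) : ℝ) : EReal) + φ z) z₀
  have : scI Sig c₂ a φ γ ≤
      ((((c₂ / 2) * ((z₀ - γ + a) ⬝ᵥ (Sig *ᵥ (z₀ - γ + a))) + (φ z₀).toReal : ℝ)) : EReal) := by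
    rw [EReal.coe_add, EReal.coe_toReal hz₀ (hφne_bot z₀)]
    exact h
  exact ne_top_of_le_ne_top (EReal.coe_ne_top _) this

lemma scI_eq (hpsd : ∀ x : Fin d → ℝ, 0 ≤ x ⬝ᵥ (Sig *ᵥ x)) (hc₂0 : 0 ≤ c₂)
    (hm : ∀ z, (m : EReal) ≤ φ z) (hφne_bot : ∀ z, φ z ≠ ⊥)
    {z₀ : Fin d → ℝ} (hz₀ : φ z₀ ≠ ⊤) (γ : Fin d → ℝ) :
    ((scG Sig c₂ a φ γ : ℝ) : EReal) = scI Sig c₂ a φ γ :=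
  EReal.coe_toReal (scI_ne_top hφne_bot hz₀ γ) (scI_ne_bot hpsd hc₂0 hm γ)

lemma scG_lb (hpsd : ∀ x : Fin d → ℝ, 0 ≤ x ⬝ᵥ (Sig *ᵥ x)) (hc₂0 : 0 ≤ c₂)
    (hm : ∀ z, (m : EReal) ≤ φ z) (hφne_bot : ∀ z, φ z ≠ ⊥)
    {z₀ : Fin d → ℝ} (hz₀ : φ z₀ ≠ ⊤) (γ : Fin d → ℝ) :
    m ≤ scG Sig c₂ a φ γ := by
  have h := scI_lb hpsd hc₂0 hm (a := a) γ
  rw [← scI_eq hpsd hc₂0 hm hφne_bot hz₀ γ] at h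
  exact EReal.coe_le_coe_iff.mp h

lemma scG_le (hpsd : ∀ x : Fin d → ℝ, 0 ≤ x ⬝ᵥ (Sig *ᵥ x)) (hc₂0 : 0 ≤ c₂)
    (hm : ∀ z, (m : EReal) ≤ φ z) (hφne_bot : ∀ z, φ z ≠ ⊥)
    {z₀ : Fin d → ℝ} (hz₀ : φ z₀ ≠ ⊤) (γ : Fin d → ℝ)
    (z : Fin d → ℝ) (hz : φ z ≠ ⊤) :
    scG Sig c₂ a φ γ ≤ (c₂ / 2) * ((z - γ + a) ⬝ᵥ (Sig *ᵥ (z - γ + a))) + (φ z).toReal := by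
  have h := iInf_le
    (fun z => (((c₂ / 2) * ((z - γ + a) ⬝ᵥ (Sig *ᵥ (z - γ + a))) : ℝ) : EReal) + φ z) z
  have h2 : scI Sig c₂ a φ γ ≤
      ((((c₂ / 2) * ((z - γ + a) ⬝ᵥ (Sig *ᵥ (z - γ + a))) + (φ z).toReal : ℝ)) : EReal) := by
    rw [EReal.coe_add, EReal.coe_toReal hz (hφne_bot z)]
    exact h
  rw [← scI_eq hpsd hc₂0 hm hφne_bot hz₀ γ] at h2
  exact EReal.coe_le_coe_iff.mp h2

lemma scG_lt (hpsd : ∀ x : Fin d → ℝ, 0 ≤ x ⬝ᵥ (Sig *ᵥ x)) (hc₂0 : 0 ≤ c₂)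
    (hm : ∀ z, (m : EReal) ≤ φ z) (hφne_bot : ∀ z, φ z ≠ ⊥)
    {z₀ : Fin d → ℝ} (hz₀ : φ z₀ ≠ ⊤) (γ : Fin d → ℝ) (ε : ℝ) (hε : 0 < ε) :
    ∃ z : Fin d → ℝ, φ z ≠ ⊤ ∧
      (c₂ / 2) * ((z - γ + a) ⬝ᵥ (Sig *ᵥ (z - γ + a))) + (φ z).toReal
        < scG Sig c₂ a φ γ + ε := by
  have hlt : scI Sig c₂ a φ γ < ((scG Sig c₂ a φ γ + ε : ℝ) : EReal) := by
    rw [← scI_eq hpsd hc₂0 hm hφne_bot hz₀ γ]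
    exact_mod_cast lt_add_of_pos_right _ hε
  obtain ⟨z, hz⟩ := iInf_lt_iff.mp hlt
  have hzt : φ z ≠ ⊤ := by
    intro h
    rw [h, EReal.coe_add_top] at hz
    exact absurd hz (not_lt.mpr le_top)
  refine ⟨z, hzt, ?_⟩
  rw [← EReal.coe_toReal hzt (hφne_bot z), ← EReal.coe_add] at hz
  exact EReal.coe_lt_coe_iff.mp hz

lemma scG_convex (hpsd : ∀ x : Fin d → ℝ, 0 ≤ x ⬝ᵥ (Sig *ᵥ x)) (hc₂0 : 0 ≤ c₂)
    (hm : ∀ z, (m : EReal) ≤ φ z) (hφne_bot : ∀ z, φ z ≠ ⊥)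
    {z₀ : Fin d → ℝ} (hz₀ : φ z₀ ≠ ⊤)
    (hφconv : ∀ x y : Fin d → ℝ, ∀ s t : ℝ, 0 ≤ s → 0 ≤ t → s + t = 1 →
      φ (s • x + t • y) ≤ (s : EReal) * φ x + (t : EReal) * φ y)
    (x y : Fin d → ℝ) (s t : ℝ) (hs : 0 ≤ s) (ht : 0 ≤ t) (hst : s + t = 1) :
    scG Sig c₂ a φ (s • x + t • y) ≤ s * scG Sig c₂ a φ x + t * scG Sig c₂ a φ y := by
  rcases eq_or_lt_of_le hs with hs0 | hs0
  · have ht1 : t = 1 := by linarith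
    subst ht1
    rw [← hs0]
    simp
  rcases eq_or_lt_of_le ht with ht0 | ht0
  · have hs1 : s = 1 := by linarith
    subst hs1
    rw [← ht0]
    simp
  apply le_of_forall_pos_le_add
  intro ε hε
  obtain ⟨zx, hzxt, hzx⟩ := scG_lt (a := a) hpsd hc₂0 hm hφne_bot hz₀ x ε hε
  obtain ⟨zy, hzyt, hzy⟩ := scG_lt (a := a) hpsd hc₂0 hm hφne_bot hz₀ y ε hε
  have hφz := hφconv zx zy s t hs ht hst
  rw [← EReal.coe_toReal hzxt (hφne_bot zx), ← EReal.coe_toReal hzyt (hφne_bot zy),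
    ← EReal.coe_mul, ← EReal.coe_mul, ← EReal.coe_add] at hφz
  have hzt : φ (s • zx + t • zy) ≠ ⊤ := ne_top_of_le_ne_top (EReal.coe_ne_top _) hφz
  have hptr : (φ (s • zx + t • zy)).toReal ≤ s * (φ zx).toReal + t * (φ zy).toReal := by
    have h := EReal.toReal_le_toReal hφz (hφne_bot _) (EReal.coe_ne_top _)
    rwa [EReal.toReal_coe] at h
  have key := scG_le (a := a) hpsd hc₂0 hm hφne_bot hz₀ (s • x + t • y) (s • zx + t • zy) hzt
  have hvec : (s • zx + t • zy) - (s • x + t • y) + a = s • (zx - x + a) + t • (zy - y + a) := by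
    funext i
    simp only [Pi.add_apply, Pi.sub_apply, Pi.smul_apply, smul_eq_mul]
    linear_combination (-(a i)) * hst
  have hq := quadId (Sig := Sig) (zx - x + a) (zy - y + a) s t hst
  have hq2 : (c₂ / 2) * ((((s • zx + t • zy) - (s • x + t • y) + a)) ⬝ᵥ
        (Sig *ᵥ (((s • zx + t • zy) - (s • x + t • y) + a))))
      = s * ((c₂ / 2) * ((zx - x + a) ⬝ᵥ (Sig *ᵥ (zx - x + a))))
        + t * ((c₂ / 2) * ((zy - y + a) ⬝ᵥ (Sig *ᵥ (zy - y + a))))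
        - (c₂ / 2) * (s * t) *
          (((zx - x + a) - (zy - y + a)) ⬝ᵥ (Sig *ᵥ ((zx - x + a) - (zy - y + a)))) := by
    rw [hvec]
    linear_combination (-(c₂ / 2)) * hq
  have hBd : 0 ≤ ((zx - x + a) - (zy - y + a)) ⬝ᵥ (Sig *ᵥ ((zx - x + a) - (zy - y + a))) :=
    hpsd _
  have hfac : 0 ≤ (c₂ / 2) * (s * t) := by positivity
  have hx2 := mul_le_mul_of_nonneg_left hzx.le hs
  have hy2 := mul_le_mul_of_nonneg_left hzy.le ht
  have hpe : s * ε + t * ε = ε := by linear_combination ε * hst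
  nlinarith [mul_nonneg hfac hBd]

lemma scG_smooth (hpsd : ∀ x : Fin d → ℝ, 0 ≤ x ⬝ᵥ (Sig *ᵥ x)) (hc₂0 : 0 ≤ c₂)
    (hm : ∀ z, (m : EReal) ≤ φ z) (hφne_bot : ∀ z, φ z ≠ ⊥)
    {z₀ : Fin d → ℝ} (hz₀ : φ z₀ ≠ ⊤)
    (lammax : ℝ) (hmax : ∀ x : Fin d → ℝ, x ⬝ᵥ (Sig *ᵥ x) ≤ lammax * (x ⬝ᵥ x))
    (γ₀ γ₁ : Fin d → ℝ) (s t : ℝ) (hs : 0 ≤ s) (ht : 0 ≤ t) (hst : s + t = 1) :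
    s * scG Sig c₂ a φ γ₀ + t * scG Sig c₂ a φ γ₁ ≤
      scG Sig c₂ a φ (s • γ₀ + t • γ₁)
        + (c₂ * lammax / 2) * (s * t) * ((γ₀ - γ₁) ⬝ᵥ (γ₀ - γ₁)) := by
  apply le_of_forall_pos_le_add
  intro ε hε
  obtain ⟨z, hzt, hz⟩ := scG_lt (a := a) hpsd hc₂0 hm hφne_bot hz₀ (s • γ₀ + t • γ₁) ε hε
  have h0 := scG_le (a := a) hpsd hc₂0 hm hφne_bot hz₀ γ₀ z hzt
  have h1 := scG_le (a := a) hpsd hc₂0 hm hφne_bot hz₀ γ₁ z hzt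
  have hvec : s • (z - γ₀ + a) + t • (z - γ₁ + a) = z - (s • γ₀ + t • γ₁) + a := by
    funext i
    simp only [Pi.add_apply, Pi.sub_apply, Pi.smul_apply, smul_eq_mul]
    linear_combination (z i + a i) * hst
  have hdiff : (z - γ₀ + a) - (z - γ₁ + a) = γ₁ - γ₀ := by
    funext i
    simp only [Pi.add_apply, Pi.sub_apply]
    ring
  have hq := quadId (Sig := Sig) (z - γ₀ + a) (z - γ₁ + a) s t hst
  rw [hvec, hdiff] at hq
  have hq2 : s * ((c₂ / 2) * ((z - γ₀ + a) ⬝ᵥ (Sig *ᵥ (z - γ₀ + a))))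
      + t * ((c₂ / 2) * ((z - γ₁ + a) ⬝ᵥ (Sig *ᵥ (z - γ₁ + a))))
      = (c₂ / 2) * ((z - (s • γ₀ + t • γ₁) + a) ⬝ᵥ (Sig *ᵥ (z - (s • γ₀ + t • γ₁) + a)))
        + (c₂ / 2) * (s * t) * ((γ₁ - γ₀) ⬝ᵥ (Sig *ᵥ (γ₁ - γ₀))) := by
    linear_combination (c₂ / 2) * hq
  have hb := hmax (γ₁ - γ₀)
  have hQQ : (γ₁ - γ₀) ⬝ᵥ (γ₁ - γ₀) = (γ₀ - γ₁) ⬝ᵥ (γ₀ - γ₁) := by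
    rw [show γ₁ - γ₀ = -(γ₀ - γ₁) from (neg_sub γ₀ γ₁).symm, neg_dotProduct,
      dotProduct_neg, neg_neg]
  rw [hQQ] at hb
  have hb2 := mul_le_mul_of_nonneg_left hb (show (0:ℝ) ≤ (c₂ / 2) * (s * t) by positivity)
  have hmul0 := mul_le_mul_of_nonneg_left h0 hs
  have hmul1 := mul_le_mul_of_nonneg_left h1 ht
  have hp : s * (φ z).toReal + t * (φ z).toReal = (φ z).toReal := by
    linear_combination (φ z).toReal * hst
  nlinarith [hz]

end SCAux


open SCAux in
theorem conjugate_of_carved_objective_strongly_convex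
    {d : ℕ} (Sig : Matrix (Fin d) (Fin d) ℝ)
    (hSigpd : Sig.PosDef) (hSigsym : Sig.IsSymm)
    (lammax : ℝ) (hlam : 0 < lammax)
    -- `λ_max` is the largest eigenvalue of `Σ̂`: upper bound on the quadratic form
    (hmax : ∀ x : Fin d → ℝ, x ⬝ᵥ (Sig *ᵥ x) ≤ lammax * (x ⬝ᵥ x))
    (r : ℝ) (hr : r ∈ Set.Ioo (0 : ℝ) 1)
    (c₂ : ℝ) (hc₂ : c₂ = (1 - r)⁻¹ * r)
    (a : Fin d → ℝ)
    (φ : (Fin d → ℝ) → EReal)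
    -- `φ` is convex
    (hφconv : ∀ x y : Fin d → ℝ, ∀ s t : ℝ, 0 ≤ s → 0 ≤ t → s + t = 1 →
      φ (s • x + t • y) ≤ (s : EReal) * φ x + (t : EReal) * φ y)
    -- `φ` is lower semicontinuous
    (hφlsc : LowerSemicontinuous φ)
    -- `φ` is proper (never `-∞`, not identically `+∞`)
    (hφne_bot : ∀ z, φ z ≠ ⊥) (hφproper : ∃ z, φ z ≠ ⊤)
    -- `φ` is bounded below
    (hφbdd : ∃ m : ℝ, ∀ z, (m : EReal) ≤ φ z)
    -- the carved objective `D`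
    (D : (Fin d → ℝ) → ℝ)
    (hD : D = fun γ => (1 / 2) * (γ ⬝ᵥ (Sig *ᵥ γ)) +
      (⨅ z : Fin d → ℝ,
        (((c₂ / 2) * ((z - γ + a) ⬝ᵥ (Sig *ᵥ (z - γ + a))) : ℝ) : EReal) + φ z).toReal)
    -- the Fenchel conjugate `D*`
    (Dstar : (Fin d → ℝ) → ℝ)
    (hDstar : Dstar = fun η => ⨆ γ : Fin d → ℝ, (γ ⬝ᵥ η - D γ)) :
    ConvexOn ℝ Set.univ D ∧
      ConvexOn ℝ Set.univ (fun η => Dstar η - (1 - r) * lammax⁻¹ / 2 * (η ⬝ᵥ η)) := by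
  obtain ⟨hr0, hr1⟩ := hr
  obtain ⟨m, hm⟩ := hφbdd
  obtain ⟨z₀, hz₀⟩ := hφproper
  have h1r : (0:ℝ) < 1 - r := by linarith
  have hc₂0 : 0 ≤ c₂ := by rw [hc₂]; positivity
  have hpsd : ∀ x : Fin d → ℝ, 0 ≤ x ⬝ᵥ (Sig *ᵥ x) := by
    intro x
    have h := hSigpd.posSemidef.re_dotProduct_nonneg x
    simpa using h
  have hDG : ∀ γ, D γ = (1/2) * (γ ⬝ᵥ (Sig *ᵥ γ)) + SCAux.scG Sig c₂ a φ γ := by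
    intro γ
    simp only [hD, SCAux.scG, SCAux.scI]
  have hDconv : ConvexOn ℝ Set.univ D := by
    refine ⟨convex_univ, ?_⟩
    intro x _ y _ s t hs ht hst
    simp only [smul_eq_mul]
    rw [hDG, hDG, hDG]
    have hGc := SCAux.scG_convex (a := a) hpsd hc₂0 hm hφne_bot hz₀ hφconv x y s t hs ht hst
    have hq := SCAux.quadId (Sig := Sig) x y s t hst
    have hnn : 0 ≤ s * t * ((x - y) ⬝ᵥ (Sig *ᵥ (x - y))) := by
      have h := hpsd (x - y); positivity
    linarith [hGc, hq, hnn]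
  have hDsmooth : ∀ γ₀ γ₁ : Fin d → ℝ, ∀ s t : ℝ, 0 ≤ s → 0 ≤ t → s + t = 1 →
      s * D γ₀ + t * D γ₁ ≤ D (s • γ₀ + t • γ₁)
        + ((1 + c₂) * lammax / 2) * (s * t) * ((γ₀ - γ₁) ⬝ᵥ (γ₀ - γ₁)) := by
    intro γ₀ γ₁ s t hs ht hst
    rw [hDG, hDG, hDG]
    have hGs := SCAux.scG_smooth (a := a) hpsd hc₂0 hm hφne_bot hz₀ lammax hmax γ₀ γ₁ s t hs ht hst
    have hq := SCAux.quadId (Sig := Sig) γ₀ γ₁ s t hst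
    have hb := hmax (γ₀ - γ₁)
    have hb2 := mul_le_mul_of_nonneg_left hb (show (0:ℝ) ≤ (1/2) * (s*t) by positivity)
    linarith [hGs, hq, hb2]
  have hdet : IsUnit Sig.det := isUnit_iff_ne_zero.mpr (ne_of_gt hSigpd.det_pos)
  have hbdd : ∀ η : Fin d → ℝ, BddAbove (Set.range fun γ : Fin d → ℝ => γ ⬝ᵥ η - D γ) := by
    intro η
    set w := Sig⁻¹ *ᵥ η with hw
    have hSw : Sig *ᵥ w = η := by
      rw [hw, Matrix.mulVec_mulVec, Matrix.mul_nonsing_inv _ hdet, Matrix.one_mulVec]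
    refine ⟨(1/2) * (w ⬝ᵥ η) - m, ?_⟩
    rintro v ⟨γ, rfl⟩
    have h0 := hpsd (γ - w)
    have hexp : (γ - w) ⬝ᵥ (Sig *ᵥ (γ - w))
        = γ ⬝ᵥ (Sig *ᵥ γ) - 2 * (γ ⬝ᵥ η) + w ⬝ᵥ η := by
      rw [Matrix.mulVec_sub]
      simp only [dotProduct_sub, sub_dotProduct]
      rw [SCAux.symm_dot hSigsym w γ, hSw]
      ring
    rw [hexp] at h0
    have hG := SCAux.scG_lb (a := a) hpsd hc₂0 hm hφne_bot hz₀ γ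
    show γ ⬝ᵥ η - D γ ≤ (1/2) * (w ⬝ᵥ η) - m
    rw [hDG]
    linarith
  have hDs : ∀ η γ' : Fin d → ℝ, γ' ⬝ᵥ η - D γ' ≤ Dstar η := by
    intro η γ'
    rw [hDstar]
    exact le_ciSup (hbdd η) γ'
  have hDsup : ∀ (η : Fin d → ℝ) (A : ℝ), (∀ γ' : Fin d → ℝ, γ' ⬝ᵥ η - D γ' ≤ A) →
      Dstar η ≤ A := by
    intro η A h
    rw [hDstar]
    exact ciSup_le h
  refine ⟨hDconv, convex_univ, ?_⟩
  intro η₀ _ η₁ _ s t hs ht hst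
  simp only [smul_eq_mul]
  set c := (1 - r) * lammax⁻¹ with hc
  have hLc : ((1 + c₂) * lammax) * c = 1 := by
    rw [hc, hc₂]
    field_simp
    ring
  have main : Dstar (s • η₀ + t • η₁) ≤ s * Dstar η₀ + t * Dstar η₁
      - c/2 * (s*t) * ((η₀ - η₁) ⬝ᵥ (η₀ - η₁)) := by
    apply hDsup
    intro γ
    set γA := γ + (t * c) • (η₀ - η₁) with hγA
    set γB := γ - (s * c) • (η₀ - η₁) with hγB
    have key1 := hDs η₀ γA
    have key2 := hDs η₁ γB
    have hcomb : s • γA + t • γB = γ := by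
      funext i
      simp only [hγA, hγB, Pi.add_apply, Pi.sub_apply, Pi.smul_apply, smul_eq_mul]
      linear_combination (γ i) * hst
    have hdiffAB : γA - γB = c • (η₀ - η₁) := by
      funext i
      simp only [hγA, hγB, Pi.add_apply, Pi.sub_apply, Pi.smul_apply, smul_eq_mul]
      linear_combination (c * (η₀ i - η₁ i)) * hst
    have hQAB : (γA - γB) ⬝ᵥ (γA - γB) = c^2 * ((η₀ - η₁) ⬝ᵥ (η₀ - η₁)) := by
      rw [hdiffAB]
      simp only [smul_dotProduct, dotProduct_smul, smul_eq_mul]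
      ring
    have keyD := hDsmooth γA γB s t hs ht hst
    rw [hcomb, hQAB] at keyD
    have he : ((1 + c₂) * lammax / 2) * (s * t) * (c^2 * ((η₀ - η₁) ⬝ᵥ (η₀ - η₁)))
        = c/2 * (s*t) * ((η₀ - η₁) ⬝ᵥ (η₀ - η₁)) := by
      linear_combination (s * t * ((η₀ - η₁) ⬝ᵥ (η₀ - η₁)) * c / 2) * hLc
    have hA : γA ⬝ᵥ η₀ = γ ⬝ᵥ η₀ + (t * c) * ((η₀ - η₁) ⬝ᵥ η₀) := by
      simp only [hγA, add_dotProduct, smul_dotProduct, smul_eq_mul]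
    have hB : γB ⬝ᵥ η₁ = γ ⬝ᵥ η₁ - (s * c) * ((η₀ - η₁) ⬝ᵥ η₁) := by
      simp only [hγB, sub_dotProduct, smul_dotProduct, smul_eq_mul]
    have hγη : γ ⬝ᵥ (s • η₀ + t • η₁) = s * (γ ⬝ᵥ η₀) + t * (γ ⬝ᵥ η₁) := by
      simp only [dotProduct_add, dotProduct_smul, smul_eq_mul]
    have hsplit : (η₀ - η₁) ⬝ᵥ (η₀ - η₁) = (η₀ - η₁) ⬝ᵥ η₀ - (η₀ - η₁) ⬝ᵥ η₁ :=
      dotProduct_sub _ _ _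
    have hsplitm : (s*t*c) * ((η₀ - η₁) ⬝ᵥ η₀) - (s*t*c) * ((η₀ - η₁) ⬝ᵥ η₁)
        = (s*t*c) * ((η₀ - η₁) ⬝ᵥ (η₀ - η₁)) := by
      linear_combination (-(s*t*c)) * hsplit
    rw [hA] at key1
    rw [hB] at key2
    have km1 := mul_le_mul_of_nonneg_left key1 hs
    have km2 := mul_le_mul_of_nonneg_left key2 ht
    rw [hγη]
    linarith [km1, km2, keyD, he, hsplitm]
  have hQ := SCAux.dotId η₀ η₁ s t hst
  have hQ2 : c/2 * (s * (η₀ ⬝ᵥ η₀)) + c/2 * (t * (η₁ ⬝ᵥ η₁))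
      = c/2 * ((s • η₀ + t • η₁) ⬝ᵥ (s • η₀ + t • η₁))
        + c/2 * (s * t * ((η₀ - η₁) ⬝ᵥ (η₀ - η₁))) := by
    linear_combination (c/2) * hQ
  linarith [main, hQ2]
end
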